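/- arXiv:0803.1909 — 2 statements merged into one kernel-verified Lean document; each statement's English description precedes it below -/
import Mathlib

section
/- Let Σ be a p×p symmetric matrix whose entries satisfy max_j Σ_{i : |i-j| > k} |σ_{ij}| ≤ C k^{-α} for all k > 0. Then the k-banded matrix B_k(Σ), obtained by setting to zero all entries with |i-j| > k, satisfies ‖B_k(Σ) - Σ‖ ≤ C k^{-α} in the l²-operator norm. -/
noncomputable def specNorm {p : ℕ} (M : Matrix (Fin p) (Fin p) ℝ) : ℝ :=
  ‖Matrix.toEuclideanCLM (𝕜 := ℝ) M‖

/-- The banding operator `B_k`. -/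
def band {p : ℕ} (k : ℕ) (M : Matrix (Fin p) (Fin p) ℝ) : Matrix (Fin p) (Fin p) ℝ :=
  Matrix.of fun i j => if |(i : ℤ) - (j : ℤ)| ≤ (k : ℤ) then M i j else 0

lemma specNorm_le_of_sums {p : ℕ} (M : Matrix (Fin p) (Fin p) ℝ) (R : ℝ) (hR : 0 ≤ R)
    (hrow : ∀ i, ∑ j, |M i j| ≤ R) (hcol : ∀ j, ∑ i, |M i j| ≤ R) :
    specNorm M ≤ R := by
  refine ContinuousLinearMap.opNorm_le_bound _ hR ?_
  intro x
  set y := Matrix.toEuclideanCLM (𝕜 := ℝ) M x with hy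
  have hyi : ∀ i, y i = ∑ j, M i j * x j := by
    intro i
    rfl
  have hsq : ‖y‖ ^ 2 ≤ (R * ‖x‖) ^ 2 := by
    have h1 : ‖y‖ ^ 2 = ∑ i, (y i) ^ 2 := by
      rw [EuclideanSpace.norm_eq, Real.sq_sqrt (by positivity)]
      simp [Real.norm_eq_abs, sq_abs]
    have h2 : ‖x‖ ^ 2 = ∑ j, (x j) ^ 2 := by
      rw [EuclideanSpace.norm_eq, Real.sq_sqrt (by positivity)]
      simp [Real.norm_eq_abs, sq_abs]
    rw [h1, mul_pow, h2]
    calc ∑ i, (y i) ^ 2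
        ≤ ∑ i, (∑ j, |M i j| * |x j|) ^ 2 := by
          refine Finset.sum_le_sum fun i _ => ?_
          rw [← sq_abs (y i)]
          have hb : |y i| ≤ ∑ j, |M i j| * |x j| := by
            rw [hyi]
            calc |∑ j, M i j * x j| ≤ ∑ j, |M i j * x j| := Finset.abs_sum_le_sum_abs _ _
              _ = ∑ j, |M i j| * |x j| := by simp [abs_mul]
          exact pow_le_pow_left₀ (abs_nonneg _) hb 2
      _ ≤ ∑ i, (∑ j, |M i j|) * (∑ j, |M i j| * (x j) ^ 2) := by
          refine Finset.sum_le_sum fun i _ => ?_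
          refine Finset.sum_sq_le_sum_mul_sum_of_sq_eq_mul _
            (fun j _ => abs_nonneg _) (fun j _ => by positivity) (fun j _ => ?_)
          rw [mul_pow, sq_abs (x j), pow_two, mul_assoc]
      _ ≤ ∑ i, R * (∑ j, |M i j| * (x j) ^ 2) := by
          refine Finset.sum_le_sum fun i _ => ?_
          have : 0 ≤ ∑ j, |M i j| * (x j) ^ 2 :=
            Finset.sum_nonneg fun j _ => by positivity
          exact mul_le_mul_of_nonneg_right (hrow i) this
      _ = R * ∑ j, (∑ i, |M i j|) * (x j) ^ 2 := by
          rw [← Finset.mul_sum, Finset.sum_comm]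
          congr 1
          refine Finset.sum_congr rfl fun j _ => ?_
          rw [Finset.sum_mul]
      _ ≤ R * ∑ j, R * (x j) ^ 2 := by
          refine mul_le_mul_of_nonneg_left (Finset.sum_le_sum fun j _ => ?_) hR
          exact mul_le_mul_of_nonneg_right (hcol j) (sq_nonneg _)
      _ = R ^ 2 * ∑ j, (x j) ^ 2 := by
          rw [← Finset.mul_sum]; ring
  have h := Real.sqrt_le_sqrt hsq
  rwa [Real.sqrt_sq (norm_nonneg _), Real.sqrt_sq (by positivity)] at h

theorem stmt4 {p : ℕ} (S : Matrix (Fin p) (Fin p) ℝ) (hS : S.transpose = S)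
    (C α : ℝ) (hC : 0 < C) (hα : 0 < α)
    (hdecay : ∀ k : ℕ, 0 < k → ∀ j : Fin p,
      (∑ i ∈ Finset.univ.filter (fun i : Fin p => (k : ℤ) < |(i : ℤ) - (j : ℤ)|), |S i j|)
        ≤ C * (k : ℝ) ^ (-α)) :
    ∀ k : ℕ, 0 < k → specNorm (band k S - S) ≤ C * (k : ℝ) ^ (-α) := by
  intro k hk
  set R := C * (k : ℝ) ^ (-α) with hRdef
  have hR : 0 ≤ R := by positivity
  set D := band k S - S with hD
  have hDij : ∀ i j, D i j = if (k : ℤ) < |(i : ℤ) - (j : ℤ)| then -S i j else 0 := by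
    intro i j
    simp only [hD, Matrix.sub_apply, band, Matrix.of_apply]
    split_ifs with h1 h2 h2
    · exact absurd h2 (not_lt.2 h1)
    · ring
    · ring
    · exact absurd (not_lt.1 h2) h1
  have hcol : ∀ j, ∑ i, |D i j| ≤ R := by
    intro j
    have : ∑ i, |D i j| = ∑ i ∈ Finset.univ.filter
        (fun i : Fin p => (k : ℤ) < |(i : ℤ) - (j : ℤ)|), |S i j| := by
      rw [Finset.sum_filter]
      refine Finset.sum_congr rfl fun i _ => ?_
      rw [hDij]
      split_ifs <;> simp [abs_neg]
    rw [this]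
    exact hdecay k hk j
  have hsym : ∀ i j, D i j = D j i := by
    intro i j
    rw [hDij, hDij, abs_sub_comm]
    congr 1
    have h : S i j = S j i := congrFun (congrFun hS j) i
    rw [h]
  have hrow : ∀ i, ∑ j, |D i j| ≤ R := by
    intro i
    calc ∑ j, |D i j| = ∑ j, |D j i| := by
          refine Finset.sum_congr rfl fun j _ => by rw [hsym]
      _ ≤ R := hcol i
  exact specNorm_le_of_sums D R hR hrow hcol
end

section
/- Let K be a p×p positive semidefinite matrix with diagonal entries K_{ii} ≤ C i^{-m} for all i, where m > 2. Then for every j ≥ k, Σ_{i : |i-j| > k} |K_{ij}| ≤ C (m/2 - 1)^{-1} k^{-m/2 + 1}. -/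
lemma entry_sq {p : ℕ} (K : Matrix (Fin p) (Fin p) ℝ) (hK : K.PosSemidef) (i j : Fin p) :
    (K i j)^2 ≤ K i i * K j j := by
  rcases eq_or_ne i j with rfl | hij
  · rw [sq]
  · have hq : ∀ t : ℝ, 0 ≤ K i i * (t * t) + (2 * K i j) * t + K j j := by
      intro t
      set x : Fin p → ℝ := t • (Pi.single i 1 : Fin p → ℝ) + (Pi.single j 1 : Fin p → ℝ) with hx
      have h := hK.dotProduct_mulVec_nonneg x
      have hsym : K j i = K i j := by
        have := congrFun (congrFun hK.1 i) j
        simpa [Matrix.conjTranspose_apply] using this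
      simp only [hx, star_trivial, Matrix.mulVec_add, Matrix.mulVec_smul,
        dotProduct_add, add_dotProduct, smul_dotProduct,
        dotProduct_smul, Matrix.mulVec_single, single_dotProduct,
        dotProduct_single, mul_one, smul_eq_mul, Matrix.col_apply, op_smul_eq_mul, one_mul] at h
      rw [hsym] at h
      nlinarith [h]
    have := discrim_le_zero hq
    rw [discrim] at this
    nlinarith [this]

lemma diag_nn {p : ℕ} (K : Matrix (Fin p) (Fin p) ℝ) (hK : K.PosSemidef) (i : Fin p) :
    0 ≤ K i i := by
  have h := hK.dotProduct_mulVec_nonneg ((Pi.single i 1 : Fin p → ℝ))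
  simpa [Matrix.mulVec_single, single_dotProduct] using h

lemma rpow_step {s : ℝ} (hs : 1 < s) {t : ℝ} (ht : 1 ≤ t) :
    (s - 1) * (t + 1) ^ (-s) ≤ t ^ (1 - s) - (t + 1) ^ (1 - s) := by
  have ht0 : (0:ℝ) < t := lt_of_lt_of_le one_pos ht
  have ht1 : (0:ℝ) < t + 1 := by linarith
  have hps : (0:ℝ) < (t+1) ^ (-s) := Real.rpow_pos_of_pos ht1 _
  have e1 : t ^ (1 - s) = t * t ^ (-s) := by
    rw [sub_eq_add_neg, Real.rpow_add ht0, Real.rpow_one]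
  have e3 : (t+1) ^ (1 - s) = (t+1) * (t+1) ^ (-s) := by
    rw [sub_eq_add_neg, Real.rpow_add ht1, Real.rpow_one]
  have e2 : t ^ (-s) = (t+1) ^ (-s) * (1 + t⁻¹) ^ s := by
    have h1 : (0:ℝ) < (t+1) ^ s := Real.rpow_pos_of_pos ht1 s
    have h2 : (0:ℝ) < t ^ s := Real.rpow_pos_of_pos ht0 s
    have ha : (1 + t⁻¹) = (t+1)/t := by field_simp
    rw [ha, Real.div_rpow ht1.le ht0.le, Real.rpow_neg ht1.le, Real.rpow_neg ht0.le]
    field_simp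
  have hinv : (0:ℝ) ≤ t⁻¹ := by positivity
  have bern : 1 + s * t⁻¹ ≤ (1 + t⁻¹) ^ s :=
    one_add_mul_self_le_rpow_one_add (by linarith) hs.le
  have key : (t + s) * (t+1) ^ (-s) ≤ t ^ (1 - s) := by
    rw [e1, e2]
    have h5 : t * ((t+1)^(-s) * (1 + s * t⁻¹)) ≤ t * ((t+1)^(-s) * (1 + t⁻¹)^s) := by
      apply mul_le_mul_of_nonneg_left _ ht0.le
      exact mul_le_mul_of_nonneg_left bern hps.le
    calc (t + s) * (t+1)^(-s) = t * ((t+1)^(-s) * (1 + s * t⁻¹)) := by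
          field_simp
      _ ≤ _ := h5
  rw [e3]
  nlinarith [key, hps]

lemma tail_sum {s : ℝ} (hs : 1 < s) {a : ℕ} (ha : 1 ≤ a) (b : ℕ) :
    ∑ n ∈ Finset.Ioc a b, ((n:ℝ)) ^ (-s) ≤ (s - 1)⁻¹ * (a:ℝ) ^ (1 - s) := by
  have hs0 : (0:ℝ) < s - 1 := by linarith
  rcases le_or_gt a b with hab | hab
  · have main : ∀ b : ℕ, a ≤ b → ∑ n ∈ Finset.Ioc a b, ((n:ℝ)) ^ (-s)
        ≤ (s - 1)⁻¹ * ((a:ℝ) ^ (1 - s) - (b:ℝ) ^ (1 - s)) := by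
      intro b hb
      induction b, hb using Nat.le_induction with
      | base => simp
      | succ b hb ih =>
        rw [Finset.sum_Ioc_succ_top (by omega)]
        have ht : (1:ℝ) ≤ (b:ℝ) := by exact_mod_cast le_trans ha hb
        have step := rpow_step hs ht
        have hcast : ((b:ℝ) + 1) = ((b+1 : ℕ) : ℝ) := by push_cast; ring
        rw [hcast] at step
        calc ∑ n ∈ Finset.Ioc a b, ((n:ℝ)) ^ (-s) + ((b+1:ℕ):ℝ) ^ (-s)
            ≤ (s-1)⁻¹ * ((a:ℝ)^(1-s) - (b:ℝ)^(1-s)) + (s-1)⁻¹ * ((b:ℝ)^(1-s) - ((b+1:ℕ):ℝ)^(1-s)) := by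
              apply add_le_add ih
              calc ((b+1:ℕ):ℝ) ^ (-s) = (s-1)⁻¹ * ((s-1) * ((b+1:ℕ):ℝ)^(-s)) := by
                    field_simp
                _ ≤ (s-1)⁻¹ * ((b:ℝ)^(1-s) - ((b+1:ℕ):ℝ)^(1-s)) := by
                    apply mul_le_mul_of_nonneg_left _ (by positivity)
                    exact step
          _ = (s-1)⁻¹ * ((a:ℝ)^(1-s) - ((b+1:ℕ):ℝ)^(1-s)) := by ring
    have h := main b hab
    have hb0 : (0:ℝ) ≤ (b:ℝ) ^ (1-s) := Real.rpow_nonneg (by positivity) _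
    nlinarith [h, hb0, inv_pos.mpr hs0]
  · rw [Finset.Ioc_eq_empty (by omega)]
    simp
    positivity

theorem stmt9 {p : ℕ} (K : Matrix (Fin p) (Fin p) ℝ) (hK : K.PosSemidef)
    (C m : ℝ) (hC : 0 < C) (hm : 2 < m)
    (hdiag : ∀ i : Fin p, K i i ≤ C * ((i : ℕ) + 1 : ℝ) ^ (-m)) :
    ∀ (k : ℕ) (j : Fin p), 0 < k → (k : ℝ) ≤ (j : ℕ) + 1 →
      (∑ i ∈ Finset.univ.filter (fun i : Fin p => (k : ℤ) < |(i : ℤ) - (j : ℤ)|), |K i j|)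
        ≤ C * (m / 2 - 1)⁻¹ * (k : ℝ) ^ (-m / 2 + 1) := by
  intro k j hk hkj
  set s : ℝ := m / 2 with hsdef
  have hs : 1 < s := by rw [hsdef]; linarith
  have hs0 : (0:ℝ) < s - 1 := by linarith
  have hkR : (1:ℝ) ≤ (k:ℝ) := by exact_mod_cast hk
  set J : ℕ := (j : ℕ) with hJdef
  set nj : ℝ := (J : ℝ) + 1 with hnjdef
  have hnj1 : (1:ℝ) ≤ nj := by
    rw [hnjdef]
    have : (0:ℝ) ≤ (J:ℝ) := Nat.cast_nonneg J
    linarith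
  have hnj0 : (0:ℝ) < nj := lt_of_lt_of_le one_pos hnj1
  have hknj : (k:ℝ) ≤ nj := hkj
  have hkJR : (k:ℝ) ≤ (J:ℝ) + 1 := by rw [hnjdef] at hknj; exact hknj
  -- rewrite the target exponent and constant
  have hexp : -m / 2 + 1 = 1 - s := by simp only [hsdef]; ring
  have hcon : m / 2 - 1 = s - 1 := by simp only [hsdef]
  rw [hexp, hcon]
  -- per-entry bound
  have hterm : ∀ i : Fin p,
      |K i j| ≤ (C * nj ^ (-s)) * (((i:ℕ):ℝ) + 1) ^ (-s) := by
    intro i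
    set ni : ℝ := ((i:ℕ):ℝ) + 1 with hnidef
    have hni0 : (0:ℝ) < ni := by rw [hnidef]; positivity
    have h1 : (K i j)^2 ≤ K i i * K j j := entry_sq K hK i j
    have h2 : K i i * K j j ≤ (C * ni ^ (-m)) * (C * nj ^ (-m)) := by
      apply mul_le_mul (hdiag i) (hdiag j) (diag_nn K hK j)
      exact mul_nonneg hC.le (Real.rpow_nonneg hni0.le _)
    have h3 : (C * ni ^ (-m)) * (C * nj ^ (-m)) = ((C * nj ^ (-s)) * ni ^ (-s))^2 := by
      have hms : -m = -s + -s := by rw [hsdef]; ring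
      have eni : ni ^ (-m) = ni ^ (-s) * ni ^ (-s) := by
        rw [← Real.rpow_add hni0, ← hms]
      have enj : nj ^ (-m) = nj ^ (-s) * nj ^ (-s) := by
        rw [← Real.rpow_add hnj0, ← hms]
      rw [eni, enj]; ring
    have h4 : |K i j| = Real.sqrt ((K i j)^2) := (Real.sqrt_sq_eq_abs _).symm
    rw [h4]
    have h5 : Real.sqrt ((K i j)^2) ≤ Real.sqrt (((C * nj ^ (-s)) * ni ^ (-s))^2) := by
      apply Real.sqrt_le_sqrt
      rw [← h3]; exact le_trans h1 h2
    refine h5.trans_eq ?_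
    rw [Real.sqrt_sq (by positivity)]
  -- sum bound via image in ℕ
  set F := Finset.univ.filter (fun i : Fin p => (k : ℤ) < |(i : ℤ) - (j : ℤ)|) with hF
  set A := Finset.Icc 1 (J - k) with hA
  set B := Finset.Ioc (J + k + 1) p with hB
  have hsum1 : ∑ i ∈ F, |K i j| ≤ (C * nj ^ (-s)) * ∑ i ∈ F, (((i:ℕ):ℝ) + 1) ^ (-s) := by
    rw [Finset.mul_sum]
    exact Finset.sum_le_sum fun i _ => hterm i
  have hsum2 : ∑ i ∈ F, (((i:ℕ):ℝ) + 1) ^ (-s)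
      ≤ (∑ n ∈ A, ((n:ℝ)) ^ (-s)) + ∑ n ∈ B, ((n:ℝ)) ^ (-s) := by
    have himg : ∑ i ∈ F, (((i:ℕ):ℝ) + 1) ^ (-s)
        = ∑ n ∈ F.image (fun i : Fin p => (i:ℕ) + 1), ((n:ℝ)) ^ (-s) := by
      rw [Finset.sum_image (by intro x _ y _ h; exact Fin.ext (by simp only at h; omega))]
      apply Finset.sum_congr rfl
      intro i _
      push_cast
      ring_nf
    rw [himg]
    have hsub : F.image (fun i : Fin p => (i:ℕ) + 1) ⊆ A ∪ B := by
      intro n hn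
      rw [Finset.mem_image] at hn
      obtain ⟨i, hi, rfl⟩ := hn
      rw [hF, Finset.mem_filter] at hi
      have hip : (i:ℕ) < p := i.isLt
      have habs := hi.2
      rw [hA, hB]
      simp only [Finset.mem_union, Finset.mem_Icc, Finset.mem_Ioc]
      rcases abs_cases ((i:ℤ) - (j:ℤ)) with ⟨h1, _⟩ | ⟨h1, _⟩ <;> rw [h1] at habs <;> omega
    calc ∑ n ∈ F.image (fun i : Fin p => (i:ℕ) + 1), ((n:ℝ)) ^ (-s)
        ≤ ∑ n ∈ A ∪ B, ((n:ℝ)) ^ (-s) := by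
          apply Finset.sum_le_sum_of_subset_of_nonneg hsub
          intro n _ _; positivity
      _ ≤ _ := by
          rw [Finset.sum_union (by
            rw [hA, hB, Finset.disjoint_left]
            intro n hn1 hn2
            simp only [Finset.mem_Icc] at hn1
            simp only [Finset.mem_Ioc] at hn2
            omega)]
  -- tail bound for B
  have hBbound : ∑ n ∈ B, ((n:ℝ)) ^ (-s) ≤ (s-1)⁻¹ * ((J + k + 1 : ℕ):ℝ) ^ (1-s) := by
    rw [hB]; exact tail_sum hs (by omega) p
  have htotal : ∑ i ∈ F, |K i j|
      ≤ (C * nj ^ (-s)) * ((∑ n ∈ A, ((n:ℝ)) ^ (-s)) + (s-1)⁻¹ * ((J + k + 1 : ℕ):ℝ) ^ (1-s)) := by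
    refine hsum1.trans (mul_le_mul_of_nonneg_left ?_ (by positivity))
    exact hsum2.trans (add_le_add_right hBbound _)
  rcases le_or_gt J k with hJk | hJk
  · -- A is empty
    have hAempty : A = ∅ := by rw [hA]; rw [Finset.Icc_eq_empty_iff]; omega
    rw [hAempty, Finset.sum_empty, zero_add] at htotal
    refine htotal.trans ?_
    have b1 : nj ^ (-s) ≤ (k:ℝ) ^ (-s) :=
      Real.rpow_le_rpow_of_nonpos (by positivity) hknj (by linarith)
    have b2 : ((J + k + 1 : ℕ):ℝ) ^ (1-s) ≤ (2 * (k:ℝ)) ^ (1-s) := by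
      apply Real.rpow_le_rpow_of_nonpos (by positivity) _ (by linarith)
      push_cast
      linarith [hkJR]
    have b3 : (2 * (k:ℝ)) ^ (1-s) = (2:ℝ) ^ (1-s) * (k:ℝ) ^ (1-s) :=
      Real.mul_rpow (by norm_num) (by positivity)
    have b4 : (2:ℝ) ^ (1-s) ≤ 1 :=
      Real.rpow_le_one_of_one_le_of_nonpos (by norm_num) (by linarith)
    have b5 : (k:ℝ) ^ (-s) ≤ 1 :=
      Real.rpow_le_one_of_one_le_of_nonpos hkR (by linarith)
    have hkp1 : (0:ℝ) ≤ (k:ℝ) ^ (1-s) := by positivity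
    calc C * nj ^ (-s) * ((s-1)⁻¹ * ((J + k + 1 : ℕ):ℝ) ^ (1-s))
        ≤ C * (k:ℝ) ^ (-s) * ((s-1)⁻¹ * ((2:ℝ) ^ (1-s) * (k:ℝ) ^ (1-s))) := by
          apply mul_le_mul (mul_le_mul_of_nonneg_left b1 hC.le)
          · apply mul_le_mul_of_nonneg_left _ (by positivity)
            rw [← b3]; exact b2
          · positivity
          · positivity
      _ = (C * (s-1)⁻¹) * ((k:ℝ)^(-s) * ((2:ℝ)^(1-s) * (k:ℝ)^(1-s))) := by ring
      _ ≤ (C * (s-1)⁻¹) * (k:ℝ)^(1-s) := by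
          apply mul_le_mul_of_nonneg_left _ (by positivity)
          have h11 : (k:ℝ)^(-s) * ((2:ℝ)^(1-s) * (k:ℝ)^(1-s)) ≤ 1 * (1 * (k:ℝ)^(1-s)) := by
            apply mul_le_mul b5 _ (by positivity) (by norm_num)
            exact mul_le_mul_of_nonneg_right b4 hkp1
          linarith [h11]
      _ = C * (s-1)⁻¹ * (k:ℝ)^(1-s) := by ring
  · -- A nonempty case : J ≥ k + 1
    have hAbound : ∑ n ∈ A, ((n:ℝ)) ^ (-s) ≤ 1 + (s-1)⁻¹ := by
      have hsplit : A = insert 1 (Finset.Ioc 1 (J - k)) := by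
        rw [hA]; ext n
        simp only [Finset.mem_insert, Finset.mem_Icc, Finset.mem_Ioc]
        omega
      rw [hsplit, Finset.sum_insert (by simp)]
      have : ∑ n ∈ Finset.Ioc 1 (J - k), ((n:ℝ)) ^ (-s) ≤ (s-1)⁻¹ * ((1:ℕ):ℝ) ^ (1-s) :=
        tail_sum hs le_rfl _
      simp only [Nat.cast_one, Real.one_rpow] at this ⊢
      linarith [this]
    have hB1 : ((J + k + 1 : ℕ):ℝ) ^ (1-s) ≤ 1 :=
      Real.rpow_le_one_of_one_le_of_nonpos (by exact_mod_cast Nat.one_le_iff_ne_zero.mpr (by omega)) (by linarith)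
    have htotal2 : ∑ i ∈ F, |K i j| ≤ C * ((1 + 2*(s-1)⁻¹) * nj ^ (-s)) := by
      refine htotal.trans ?_
      have : (∑ n ∈ A, ((n:ℝ)) ^ (-s)) + (s-1)⁻¹ * ((J + k + 1 : ℕ):ℝ) ^ (1-s)
          ≤ 1 + 2*(s-1)⁻¹ := by
        have h6 : (s-1)⁻¹ * ((J + k + 1 : ℕ):ℝ) ^ (1-s) ≤ (s-1)⁻¹ * 1 :=
          mul_le_mul_of_nonneg_left hB1 (by positivity)
        linarith [hAbound]
      calc (C * nj ^ (-s)) * ((∑ n ∈ A, ((n:ℝ)) ^ (-s)) + (s-1)⁻¹ * ((J + k + 1 : ℕ):ℝ) ^ (1-s))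
          ≤ (C * nj ^ (-s)) * (1 + 2*(s-1)⁻¹) := by
            apply mul_le_mul_of_nonneg_left this (by positivity)
        _ = C * ((1 + 2*(s-1)⁻¹) * nj ^ (-s)) := by ring
    refine htotal2.trans ?_
    -- key arithmetic: (1 + 2(s-1)⁻¹) * nj^(-s) ≤ (s-1)⁻¹ * k^(1-s)
    have hk0 : (0:ℝ) < (k:ℝ) := by positivity
    have hnjk2 : (k:ℝ) + 2 ≤ nj := by
      have : k + 1 ≤ J := by omega
      have : ((k:ℝ)) + 1 ≤ (J:ℝ) := by exact_mod_cast this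
      rw [hnjdef]; linarith
    have bern2 : 1 + s * (2/(k:ℝ)) ≤ (1 + 2/(k:ℝ)) ^ s :=
      one_add_mul_self_le_rpow_one_add
        (by
          have h0 : (0:ℝ) ≤ 2/(k:ℝ) := by positivity
          linarith) hs.le
    have hpow1 : ((k:ℝ) + 2) ^ s = (k:ℝ)^s * (1 + 2/(k:ℝ)) ^ s := by
      rw [← Real.mul_rpow (by positivity) (by positivity)]
      congr 1
      field_simp
    have hks1 : (k:ℝ)^s / (k:ℝ) = (k:ℝ)^(s-1) := by
      rw [Real.rpow_sub hk0, Real.rpow_one]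
    have hkey : (s + 1) * (k:ℝ)^(s-1) ≤ nj ^ s := by
      have h7 : (k:ℝ)^s * (1 + 2/(k:ℝ)) ^ s ≥ (k:ℝ)^s * (1 + s * (2/(k:ℝ))) :=
        mul_le_mul_of_nonneg_left bern2 (by positivity)
      have h8 : (k:ℝ)^s * (1 + s * (2/(k:ℝ))) = (k:ℝ)^s + 2*s*(k:ℝ)^(s-1) := by
        rw [← hks1]; field_simp
      have h9 : (k:ℝ)^(s-1) ≤ (k:ℝ)^s :=
        Real.rpow_le_rpow_of_exponent_le hkR (by linarith)
      have h10 : ((k:ℝ) + 2) ^ s ≤ nj ^ s :=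
        Real.rpow_le_rpow (by positivity) hnjk2 (by linarith)
      have h12 : (k:ℝ)^(s-1) ≤ s * (k:ℝ)^(s-1) := by
        nlinarith [Real.rpow_pos_of_pos hk0 (s-1), hs]
      have hu : (0:ℝ) ≤ (k:ℝ)^(s-1) := (Real.rpow_pos_of_pos hk0 (s-1)).le
      linarith [h7, h8, h9, h10, hpow1, h12, hu]
    have hfin : (1 + 2*(s-1)⁻¹) * nj ^ (-s) ≤ (s-1)⁻¹ * (k:ℝ) ^ (1-s) := by
      have hnjs : (0:ℝ) < nj ^ s := Real.rpow_pos_of_pos hnj0 s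
      have hks : (0:ℝ) < (k:ℝ) ^ (s-1) := Real.rpow_pos_of_pos hk0 _
      have e4 : nj ^ (-s) = (nj ^ s)⁻¹ := by rw [Real.rpow_neg hnj0.le]
      have e5 : (k:ℝ) ^ (1-s) = ((k:ℝ)^(s-1))⁻¹ := by
        rw [show (1-s) = -(s-1) by ring, Real.rpow_neg hk0.le]
      rw [e4, e5]
      have hnjsne : nj ^ s ≠ 0 := ne_of_gt hnjs
      rw [show (1 + 2*(s-1)⁻¹) * (nj^s)⁻¹ = (s-1)⁻¹ * ((s+1) / (nj^s)) by
        field_simp; ring]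
      apply mul_le_mul_of_nonneg_left _ (by positivity)
      rw [div_le_iff₀ hnjs]
      calc (s+1) = ((k:ℝ)^(s-1))⁻¹ * ((s+1) * (k:ℝ)^(s-1)) := by field_simp
        _ ≤ ((k:ℝ)^(s-1))⁻¹ * nj^s := mul_le_mul_of_nonneg_left hkey (by positivity)
    calc C * ((1 + 2*(s-1)⁻¹) * nj ^ (-s)) ≤ C * ((s-1)⁻¹ * (k:ℝ) ^ (1-s)) :=
          mul_le_mul_of_nonneg_left hfin hC.le
      _ = C * (s-1)⁻¹ * (k:ℝ) ^ (1-s) := by ring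
end
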